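/- Let S be a finite subset of Z^2 with small height variations (|j| <= 1 for all (i,j) in S), and set A_j(x) = sum_{(i,j) in S} x^i for j = -1,0,1. Let Z(x;t) be the unique element of Q[x,x^{-1}][[t]] that is a multiple of t and satisfies t Z^2 - (1 - t A_0(x)) Z + t A_1(x) A_{-1}(x) = 0. For j in Z, let S_j(x;t) in Q[x,x^{-1}][[t]] be the generating function for walks on the slit plane ending at ordinate j, and S_0(x;t) that for walks ending on the x-axis. Then for every j >= 0: A_{-1}(x)^j * S_j(x;t) = S_0(x;t) * Z(x;t)^j, and A_1(x)^j * S_{-j}(x;t) = S_0(x;t) * Z(x;t)^j. -/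

import Mathlib

open scoped Classical
open PowerSeries

namespace SlitPlane

/-- A point (or step) of the lattice `ℤ²`. -/
abbrev Pt := ℤ × ℤ

/-- All steps of the walk `l` belong to `S`.  A walk is identified with its
list of steps; it starts at the origin. -/
def StepsIn (S : Finset Pt) (l : List Pt) : Prop := ∀ s ∈ l, s ∈ S

/-- The vertex `w_i` of the walk reached after `i` steps. -/
def vert (l : List Pt) (i : ℕ) : Pt := (l.take i).sum

/-- Membership in the half-line `H = {(k,0) : k ≤ 0}`. -/
def OnH (p : Pt) : Prop := p.2 = 0 ∧ p.1 ≤ 0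

/-- Membership in the half-line `{(k,0) : k < 0}`. -/
def OnNegAxis (p : Pt) : Prop := p.2 = 0 ∧ p.1 < 0

/-- A walk on the slit plane: none of the vertices `w_1, ..., w_n` lies on `H`. -/
def AvoidsH (l : List Pt) : Prop := ∀ i, 1 ≤ i → i ≤ l.length → ¬ OnH (vert l i)

/-- Number of walks of length `n` on the slit plane, with steps in `S`, ending at `e`. -/
noncomputable def slitCount (S : Finset Pt) (n : ℕ) (e : Pt) : ℕ :=
  Set.ncard {l : List Pt | l.length = n ∧ StepsIn S l ∧ AvoidsH l ∧ l.sum = e}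

/-- Number of (unconstrained) walks of length `n` with steps in `S` ending at `e`. -/
noncomputable def walkCount (S : Finset Pt) (n : ℕ) (e : Pt) : ℕ :=
  Set.ncard {l : List Pt | l.length = n ∧ StepsIn S l ∧ l.sum = e}

/-- Number of loops of length `n` with steps in `S`: walks ending at the origin,
none of whose vertices lies on `{(k,0) : k < 0}`. -/
noncomputable def loopCount (S : Finset Pt) (n : ℕ) : ℕ :=
  Set.ncard {l : List Pt | l.length = n ∧ StepsIn S l ∧
    (∀ i ≤ l.length, ¬ OnNegAxis (vert l i)) ∧ l.sum = (0, 0)}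

end SlitPlane

namespace SlitPlane

/-- The Laurent polynomial ring `ℚ[x, x⁻¹]`. -/
abbrev L1 := AddMonoidAlgebra ℚ ℤ

/-- The Laurent polynomial `A_j(x) = ∑_{(i,j) ∈ S} x^i`. -/
noncomputable def Apoly (S : Finset Pt) (j : ℤ) : L1 :=
  ∑ s ∈ S.filter (fun s => s.2 = j), AddMonoidAlgebra.single s.1 (1 : ℚ)

/-! ### infrastructure -/

noncomputable def allLists (S : Finset Pt) : ℕ → Finset (List Pt)
  | 0 => {[]}
  | n+1 => (S ×ˢ allLists S n).image fun p => p.1 :: p.2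

lemma mem_allLists {S : Finset Pt} : ∀ {n : ℕ} {l : List Pt},
    l ∈ allLists S n ↔ l.length = n ∧ StepsIn S l := by
  intro n
  induction n with
  | zero =>
    intro l
    constructor
    · intro hl
      have : l = [] := by simpa [allLists] using hl
      subst this
      exact ⟨rfl, fun s hs => absurd hs List.not_mem_nil⟩
    · rintro ⟨hlen, -⟩
      have : l = [] := List.length_eq_zero_iff.mp hlen
      subst this; simp [allLists]
  | succ n ih =>
    intro l
    simp only [allLists, Finset.mem_image, Finset.mem_product]
    constructor
    · rintro ⟨⟨s, l'⟩, ⟨hs, hl'⟩, rfl⟩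
      obtain ⟨h1, h2⟩ := ih.mp hl'
      refine ⟨by simp [h1], ?_⟩
      intro t ht
      rcases List.mem_cons.mp ht with rfl | ht
      · exact hs
      · exact h2 t ht
    · rintro ⟨hlen, hst⟩
      cases l with
      | nil => simp at hlen
      | cons s l' =>
        refine ⟨⟨s, l'⟩, ⟨hst s (by simp), ih.mpr ⟨by simpa using hlen, ?_⟩⟩, rfl⟩
        intro t ht; exact hst t (by simp [ht])

/-- The generating series of lists with steps in `S` satisfying `P`. -/
noncomputable def lser (S : Finset Pt) (P : List Pt → Prop) : PowerSeries L1 :=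
  PowerSeries.mk fun n => ∑ l ∈ (allLists S n).filter P, AddMonoidAlgebra.single l.sum.1 (1 : ℚ)

lemma coeff_lser (S : Finset Pt) (P : List Pt → Prop) (n : ℕ) :
    PowerSeries.coeff n (lser S P) =
      ∑ l ∈ (allLists S n).filter P, AddMonoidAlgebra.single l.sum.1 (1 : ℚ) := by
  simp [lser]

lemma lser_congr {S : Finset Pt} {P Q : List Pt → Prop}
    (h : ∀ l, StepsIn S l → (P l ↔ Q l)) : lser S P = lser S Q := by
  apply PowerSeries.ext; intro n
  rw [coeff_lser, coeff_lser]
  apply Finset.sum_congr _ (fun _ _ => rfl)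
  apply Finset.filter_congr
  intro l hl
  exact h l (mem_allLists.mp hl).2

lemma lser_add {S : Finset Pt} {P Q R : List Pt → Prop}
    (h : ∀ l, StepsIn S l → (P l ↔ Q l ∨ R l))
    (hd : ∀ l, StepsIn S l → ¬ (Q l ∧ R l)) :
    lser S P = lser S Q + lser S R := by
  apply PowerSeries.ext; intro n
  rw [map_add, coeff_lser, coeff_lser, coeff_lser]
  rw [Finset.filter_congr (fun l hl => by
    simp only [h l (mem_allLists.mp hl).2] : ∀ l ∈ allLists S n, P l ↔ (fun l => Q l ∨ R l) l)]
  rw [Finset.filter_or, Finset.sum_union]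
  rw [Finset.disjoint_left]
  intro l hl hl'
  simp only [Finset.mem_filter] at hl hl'
  exact hd l (mem_allLists.mp hl.1).2 ⟨hl.2, hl'.2⟩

/-! ### vert lemmas -/

lemma vert_zero (l : List Pt) : vert l 0 = 0 := by simp [vert]

lemma vert_length (l : List Pt) : vert l l.length = l.sum := by simp [vert]

lemma vert_append (p q : List Pt) (i : ℕ) :
    vert (p ++ q) i = vert p i + vert q (i - p.length) := by
  unfold vert
  rw [List.take_append, List.sum_append]

lemma vert_take (l : List Pt) (k i : ℕ) (h : i ≤ k) : vert (l.take k) i = vert l i := by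
  unfold vert
  rw [List.take_take, min_eq_left h]

lemma vert_drop (l : List Pt) (k i : ℕ) :
    vert (l.drop k) i = vert l (k + i) - vert l k := by
  have : vert l (k + i) = vert l k + vert (l.drop k) i := by
    unfold vert
    rw [List.take_add, List.sum_append]
  rw [this]; ring

lemma vert_succ (l : List Pt) (i : ℕ) (h : i < l.length) :
    vert l (i+1) = vert l i + l[i] := by
  unfold vert
  rw [List.take_succ, List.sum_append, List.getElem?_eq_getElem h]
  simp

lemma height_step {S : Finset Pt} (hS : ∀ s ∈ S, |s.2| ≤ 1) {l : List Pt}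
    (hst : StepsIn S l) {i : ℕ} (h : i < l.length) :
    |(vert l (i+1)).2 - (vert l i).2| ≤ 1 := by
  rw [vert_succ l i h]
  simp only [Prod.snd_add, add_sub_cancel_left]
  exact hS _ (hst _ (l.getElem_mem h))

/-! ### discrete IVT -/

lemma stay_above (h : ℕ → ℤ) (c : ℤ) (k n : ℕ) (hkn : k ≤ n)
    (step : ∀ i, i < n → h (i+1) ≤ h i + 1)
    (hne : ∀ m, k < m → m ≤ n → h m ≠ c) (hn : c < h n) :
    ∀ m, k < m → m ≤ n → c < h m := by
  intro m hm1 hm2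
  by_contra hcon
  push_neg at hcon
  have hlt : h m < c := lt_of_le_of_ne hcon (hne m hm1 hm2)
  have key : ∀ p, m ≤ p → p ≤ n → h p < c := by
    intro p hp
    induction p, hp using Nat.le_induction with
    | base => intro _; exact hlt
    | succ p hp ih =>
      intro hpn
      have hpn' : p ≤ n := by omega
      have h1 : h (p+1) ≤ h p + 1 := step p (by omega)
      have h2 : h p < c := ih hpn'
      have h3 : h (p+1) ≤ c := by omega
      exact lt_of_le_of_ne h3 (hne (p+1) (by omega) hpn)
  exact absurd hn (not_lt.mpr (le_of_lt (key n hm2 (le_refl n))))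

lemma stepsIn_take {S : Finset Pt} {l : List Pt} (h : StepsIn S l) (k : ℕ) :
    StepsIn S (l.take k) := fun s hs => h s (List.take_subset k l hs)

lemma stepsIn_drop {S : Finset Pt} {l : List Pt} (h : StepsIn S l) (k : ℕ) :
    StepsIn S (l.drop k) := fun s hs => h s (List.drop_subset k l hs)

lemma stepsIn_append {S : Finset Pt} {p q : List Pt} (hp : StepsIn S p) (hq : StepsIn S q) :
    StepsIn S (p ++ q) := fun s hs => by
  rcases List.mem_append.mp hs with h | h
  · exact hp s h
  · exact hq s h

noncomputable def splitIdx (A B : List Pt → Prop) (l : List Pt) : ℕ :=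
  Nat.findGreatest (fun k => A (l.take k) ∧ B (l.drop k)) l.length

lemma lser_mul {S : Finset Pt} (P A B : List Pt → Prop)
    (hsplit : ∀ l, StepsIn S l → P l → ∃ k, k ≤ l.length ∧ A (l.take k) ∧ B (l.drop k))
    (hjoin : ∀ p q, StepsIn S p → StepsIn S q → A p → B q → P (p ++ q))
    (huniq : ∀ l, StepsIn S l → ∀ k k', k ≤ l.length → k' ≤ l.length →
      A (l.take k) → B (l.drop k) → A (l.take k') → B (l.drop k') → k = k') :
    lser S P = lser S A * lser S B := by
  classical
  apply PowerSeries.ext; intro n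
  rw [PowerSeries.coeff_mul]
  simp only [coeff_lser]
  have hRHS : ∀ p : ℕ × ℕ,
      (∑ l ∈ (allLists S p.1).filter A, AddMonoidAlgebra.single l.sum.1 (1:ℚ)) *
      (∑ l ∈ (allLists S p.2).filter B, AddMonoidAlgebra.single l.sum.1 (1:ℚ))
    = ∑ x ∈ ((allLists S p.1).filter A) ×ˢ ((allLists S p.2).filter B),
        AddMonoidAlgebra.single (x.1.sum.1 + x.2.sum.1) (1:ℚ) := by
    intro p
    rw [Finset.sum_mul_sum, ← Finset.sum_product']
    apply Finset.sum_congr rfl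
    intro x _
    rw [AddMonoidAlgebra.single_mul_single, one_mul]
  simp only [hRHS]
  rw [Finset.sum_sigma']
  have hKspec : ∀ l ∈ (allLists S n).filter P,
      splitIdx A B l ≤ l.length ∧ A (l.take (splitIdx A B l)) ∧ B (l.drop (splitIdx A B l)) := by
    intro l hl
    rw [Finset.mem_filter] at hl
    obtain ⟨hl1, hl2⟩ := hl
    obtain ⟨hlen, hst⟩ := mem_allLists.mp hl1
    obtain ⟨k, hk, hA, hB⟩ := hsplit l hst hl2
    exact ⟨Nat.findGreatest_le _,
      Nat.findGreatest_spec (P := fun k => A (l.take k) ∧ B (l.drop k)) hk ⟨hA, hB⟩⟩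
  refine Finset.sum_bij'
    (i := fun l _ => ⟨(splitIdx A B l, n - splitIdx A B l), (l.take (splitIdx A B l), l.drop (splitIdx A B l))⟩)
    (j := fun x _ => x.2.1 ++ x.2.2) ?_ ?_ ?_ ?_ ?_
  · -- membership forward
    intro l hl
    obtain ⟨hKle, hA, hB⟩ := hKspec l hl
    rw [Finset.mem_filter] at hl
    obtain ⟨hlen, hst⟩ := mem_allLists.mp hl.1
    rw [Finset.mem_sigma]
    constructor
    · rw [Finset.HasAntidiagonal.mem_antidiagonal]
      show splitIdx A B l + (n - splitIdx A B l) = n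
      have : l.length = n := (mem_allLists.mp hl.1).1
      omega
    · rw [Finset.mem_product]
      constructor
      · rw [Finset.mem_filter]
        exact ⟨mem_allLists.mpr ⟨by simp [List.length_take]; omega, stepsIn_take hst _⟩, hA⟩
      · rw [Finset.mem_filter]
        exact ⟨mem_allLists.mpr ⟨by simp [List.length_drop]; omega, stepsIn_drop hst _⟩, hB⟩
  · -- membership backward
    rintro ⟨⟨a, b⟩, ⟨p, q⟩⟩ hx
    dsimp only at hx ⊢
    replace hx : a + b = n ∧ p ∈ (allLists S a).filter A ∧ q ∈ (allLists S b).filter B :=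
      ⟨Finset.HasAntidiagonal.mem_antidiagonal.mp (Finset.mem_sigma.mp hx).1,
        Finset.mem_product.mp (Finset.mem_sigma.mp hx).2⟩
    obtain ⟨hab, hp, hq⟩ := hx
    rw [Finset.mem_filter] at hp hq
    obtain ⟨hp1, hp2⟩ := hp
    obtain ⟨hq1, hq2⟩ := hq
    obtain ⟨hplen, hpst⟩ := mem_allLists.mp hp1
    obtain ⟨hqlen, hqst⟩ := mem_allLists.mp hq1
    rw [Finset.mem_filter]
    constructor
    · exact mem_allLists.mpr ⟨by simp [hplen, hqlen, hab], stepsIn_append hpst hqst⟩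
    · exact hjoin p q hpst hqst hp2 hq2
  · -- j ∘ i = id
    intro l _
    dsimp only
    exact List.take_append_drop _ l
  · -- i ∘ j = id
    rintro ⟨⟨a, b⟩, ⟨p, q⟩⟩ hx
    dsimp only at hx ⊢
    replace hx : a + b = n ∧ p ∈ (allLists S a).filter A ∧ q ∈ (allLists S b).filter B :=
      ⟨Finset.HasAntidiagonal.mem_antidiagonal.mp (Finset.mem_sigma.mp hx).1,
        Finset.mem_product.mp (Finset.mem_sigma.mp hx).2⟩
    obtain ⟨hab, hp, hq⟩ := hx
    rw [Finset.mem_filter] at hp hq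
    obtain ⟨hp1, hp2⟩ := hp
    obtain ⟨hq1, hq2⟩ := hq
    obtain ⟨hplen, hpst⟩ := mem_allLists.mp hp1
    obtain ⟨hqlen, hqst⟩ := mem_allLists.mp hq1
    have hA' : A ((p ++ q).take p.length) := by rw [List.take_left]; exact hp2
    have hB' : B ((p ++ q).drop p.length) := by rw [List.drop_left]; exact hq2
    have hlen : (p ++ q).length = n := by simp [hplen, hqlen, hab]
    have hst : StepsIn S (p ++ q) := stepsIn_append hpst hqst
    have hple : p.length ≤ (p ++ q).length := by simp
    have hKP : A ((p ++ q).take (splitIdx A B (p ++ q))) ∧ B ((p ++ q).drop (splitIdx A B (p ++ q))) :=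
      Nat.findGreatest_spec (P := fun k => A ((p++q).take k) ∧ B ((p++q).drop k)) hple ⟨hA', hB'⟩
    have hKle : splitIdx A B (p ++ q) ≤ (p ++ q).length := Nat.findGreatest_le _
    have hKeq : splitIdx A B (p ++ q) = p.length :=
      huniq (p ++ q) hst _ _ hKle hple hKP.1 hKP.2 hA' hB'
    have hab' : a + b = n := hab
    have hb' : n - a = b := by omega
    rw [hKeq, List.take_left, List.drop_left, hplen, hb']
  · -- values agree
    intro l hl
    dsimp only
    have : l.sum = (l.take (splitIdx A B l)).sum + (l.drop (splitIdx A B l)).sum := by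
      conv_lhs => rw [← List.take_append_drop (splitIdx A B l) l]
      rw [List.sum_append]
    rw [this, Prod.fst_add]

/-! ### predicates -/

def Pslit (j : ℤ) (l : List Pt) : Prop := AvoidsH l ∧ l.sum.2 = j

def Pht (φ : ℤ → Prop) (j : ℤ) (l : List Pt) : Prop :=
  (∀ i, 1 ≤ i → i ≤ l.length → φ ((vert l i).2)) ∧ l.sum.2 = j

def Pup (j : ℤ) : List Pt → Prop := Pht (fun z => 1 ≤ z) j

def Pdn (j : ℤ) : List Pt → Prop := Pht (fun z => z ≤ -1) j

def PStep (j : ℤ) (l : List Pt) : Prop := l.length = 1 ∧ l.sum.2 = j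

/-! ### evaluation and identification of `Sfam` -/

lemma eval_sum_single (T : Finset (List Pt)) (i : ℤ) :
    (∑ l ∈ T, AddMonoidAlgebra.single l.sum.1 (1:ℚ)).coeff i
      = ((T.filter (fun l => l.sum.1 = i)).card : ℚ) := by
  classical
  simp only [AddMonoidAlgebra.coeff_sum, AddMonoidAlgebra.coeff_single, Finsupp.finset_sum_apply]
  rw [Finset.sum_congr rfl (fun l _ => Finsupp.single_apply)]
  rw [Finset.sum_boole]

lemma slitCount_eq (S : Finset Pt) (n : ℕ) (i j : ℤ) :
    (slitCount S n (i, j) : ℚ)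
      = (((allLists S n).filter (fun l => Pslit j l ∧ l.sum.1 = i)).card : ℚ) := by
  classical
  congr 1
  unfold slitCount
  rw [show {l : List Pt | l.length = n ∧ StepsIn S l ∧ AvoidsH l ∧ l.sum = (i, j)}
      = ↑((allLists S n).filter (fun l => Pslit j l ∧ l.sum.1 = i)) from ?_,
    Set.ncard_coe_finset]
  ext l
  simp only [Set.mem_setOf_eq, Finset.coe_filter, Finset.mem_coe, Set.mem_setOf_eq,
    mem_allLists, Pslit, Prod.ext_iff, Finset.mem_filter, Set.mem_sep_iff]
  change _ ↔ l ∈ (allLists S n).filter (fun l => Pslit j l ∧ l.sum.1 = i)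
  rw [Finset.mem_filter, mem_allLists]
  unfold Pslit
  tauto

lemma Sfam_eq {S : Finset Pt} (Sfam : ℤ → PowerSeries L1)
    (hSfam : ∀ (j : ℤ) (n : ℕ) (i : ℤ),
      (PowerSeries.coeff n (Sfam j)).coeff i = (slitCount S n (i, j) : ℚ)) (j : ℤ) :
    Sfam j = lser S (Pslit j) := by
  apply PowerSeries.ext; intro n
  apply AddMonoidAlgebra.ext; apply Finsupp.ext; intro i
  rw [hSfam j n i, coeff_lser, eval_sum_single, Finset.filter_filter, slitCount_eq]

/-! ### single-step series -/

lemma allLists_one (S : Finset Pt) : allLists S 1 = S.image (fun s => [s]) := by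
  classical
  ext l
  constructor
  · intro hl
    obtain ⟨hlen, hst⟩ := mem_allLists.mp hl
    obtain ⟨s, rfl⟩ := List.length_eq_one_iff.mp hlen
    exact Finset.mem_image.mpr ⟨s, hst s (by simp), rfl⟩
  · intro hl
    obtain ⟨s, hs, rfl⟩ := Finset.mem_image.mp hl
    exact mem_allLists.mpr ⟨rfl, fun t ht => by rw [List.mem_singleton.mp ht]; exact hs⟩

lemma lser_PStep (S : Finset Pt) (j : ℤ) :
    lser S (PStep j) = PowerSeries.X * PowerSeries.C (Apoly S j) := by
  classical
  apply PowerSeries.ext; intro n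
  rw [coeff_lser]
  cases n with
  | zero =>
    have : (allLists S 0).filter (PStep j) = ∅ := by
      apply Finset.filter_false_of_mem
      intro l hl
      have := (mem_allLists.mp hl).1
      intro hP
      have h1 := hP.1
      omega
    simp [this]
  | succ n =>
    rw [PowerSeries.coeff_succ_X_mul, PowerSeries.coeff_C]
    cases n with
    | zero =>
      rw [if_pos rfl]
      rw [allLists_one, Finset.filter_image]
      rw [Finset.sum_image (by intro a _ b _ h; simpa using h)]
      unfold Apoly
      apply Finset.sum_congr
      · apply Finset.filter_congr
        intro s _
        simp [PStep]
      · intro s _; simp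
    | succ m =>
      rw [if_neg (by omega)]
      have : (allLists S (m + 1 + 1)).filter (PStep j) = ∅ := by
        apply Finset.filter_false_of_mem
        intro l hl hP
        have := (mem_allLists.mp hl).1
        have h1 := hP.1
        omega
      simp [this]

/-! ### constant coefficients -/

lemma coeff_zero_lser (S : Finset Pt) (P : List Pt → Prop) (hP : ¬ P []) :
    PowerSeries.coeff 0 (lser S P) = 0 := by
  classical
  rw [coeff_lser]
  have : (allLists S 0).filter P = ∅ := by
    apply Finset.filter_false_of_mem
    intro l hl
    have := List.length_eq_zero_iff.mp (mem_allLists.mp hl).1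
    subst this; exact hP
  simp [this]

/-! ### uniqueness of the quadratic root -/

lemma quad_uniq (a0 pr : L1) (Z W : PowerSeries L1)
    (hZ : PowerSeries.X * Z ^ 2 - (1 - PowerSeries.X * PowerSeries.C a0) * Z
        + PowerSeries.X * PowerSeries.C pr = 0)
    (hW : PowerSeries.X * W ^ 2 - (1 - PowerSeries.X * PowerSeries.C a0) * W
        + PowerSeries.X * PowerSeries.C pr = 0) : Z = W := by
  have key : Z - W = PowerSeries.X * ((Z + W + PowerSeries.C a0) * (Z - W)) := by
    linear_combination hW - hZ
  have hcoeff : ∀ n, PowerSeries.coeff n (Z - W) = 0 := by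
    intro n
    induction n using Nat.strong_induction_on with
    | _ n ih =>
      rw [key]
      cases n with
      | zero => simp
      | succ n =>
        rw [PowerSeries.coeff_succ_X_mul, PowerSeries.coeff_mul]
        apply Finset.sum_eq_zero
        intro p hp
        replace hp : p.1 + p.2 = n := Finset.HasAntidiagonal.mem_antidiagonal.mp hp
        have : p.2 < n + 1 := by omega
        rw [ih p.2 this, mul_zero]
  have : Z - W = 0 := PowerSeries.ext fun n => by rw [hcoeff n, map_zero]
  exact sub_eq_zero.mp this

/-! ### more helpers -/

lemma sum_take (l : List Pt) (k : ℕ) : (l.take k).sum = vert l k := rfl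

lemma sum_drop (l : List Pt) (k : ℕ) (h : k ≤ l.length) :
    (l.drop k).sum = l.sum - vert l k := by
  have h2 := vert_drop l k (l.length - k)
  rw [Nat.add_sub_cancel' h] at h2
  rw [← List.length_drop] at h2
  rw [vert_length, vert_length] at h2
  exact h2

lemma vert_of_le (l : List Pt) (i : ℕ) (h : l.length ≤ i) : vert l i = l.sum := by
  unfold vert; rw [List.take_of_length_le h]

lemma hstep_le {S : Finset Pt} (hS : ∀ s ∈ S, |s.2| ≤ 1) {l : List Pt}
    (hst : StepsIn S l) {i : ℕ} (h : i < l.length) :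
    (vert l (i+1)).2 ≤ (vert l i).2 + 1 ∧ (vert l i).2 - 1 ≤ (vert l (i+1)).2 := by
  have := abs_le.mp (height_step hS hst h)
  constructor <;> omega

lemma stay_below (h : ℕ → ℤ) (c : ℤ) (k n : ℕ) (hkn : k ≤ n)
    (step : ∀ i, i < n → h i - 1 ≤ h (i+1))
    (hne : ∀ m, k < m → m ≤ n → h m ≠ c) (hn : h n < c) :
    ∀ m, k < m → m ≤ n → h m < c := by
  intro m h1 h2
  have := stay_above (fun m => -(h m)) (-c) k n hkn
    (fun i hi => by have := step i hi; show -(h (i+1)) ≤ -(h i) + 1; omega)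
    (fun m hm1 hm2 => by have := hne m hm1 hm2; show -(h m) ≠ -c; omega)
    (by show -c < -(h n); omega) m h1 h2
  have h3 : -c < -(h m) := this
  omega

/-! ### slit decomposition -/

lemma slit_decomp_up {S : Finset Pt} (hS : ∀ s ∈ S, |s.2| ≤ 1) {j : ℤ} (hj : 1 ≤ j) :
    lser S (Pslit j) = lser S (Pslit 0) * lser S (Pup j) := by
  apply lser_mul
  · -- split
    intro l hst hP
    obtain ⟨hav, hsum⟩ := hP
    have h0 : (vert l 0).2 = 0 := by rw [vert_zero]; rfl
    have hn : (vert l l.length).2 = j := by rw [vert_length]; exact hsum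
    set k := Nat.findGreatest (fun m => (vert l m).2 = 0) l.length with hk
    have hkle : k ≤ l.length := Nat.findGreatest_le l.length
    have hk0 : (vert l k).2 = 0 :=
      Nat.findGreatest_spec (P := fun m => (vert l m).2 = 0) (Nat.zero_le l.length) h0
    have hne : ∀ m, k < m → m ≤ l.length → (vert l m).2 ≠ 0 := fun m h1 h2 =>
      Nat.findGreatest_is_greatest (P := fun m => (vert l m).2 = 0) h1 h2
    have hpos : ∀ m, k < m → m ≤ l.length → 1 ≤ (vert l m).2 := by
      intro m h1 h2
      have := stay_above (fun m => (vert l m).2) 0 k l.length hkle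
        (fun i hi => (hstep_le hS hst hi).1) hne
        (show (0:ℤ) < (vert l l.length).2 by omega) m h1 h2
      have h3 : (0:ℤ) < (vert l m).2 := this
      omega
    refine ⟨k, hkle, ⟨?_, ?_⟩, ⟨?_, ?_⟩⟩
    · intro i hi1 hi2
      rw [List.length_take] at hi2
      rw [vert_take l k i (by omega)]
      exact hav i hi1 (by omega)
    · show ((l.take k).sum).2 = 0
      rw [sum_take]; exact hk0
    · intro m hm1 hm2
      rw [List.length_drop] at hm2
      rw [vert_drop]
      have := hpos (k + m) (by omega) (by omega)
      simp only [Prod.snd_sub]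
      omega
    · show ((l.drop k).sum).2 = j
      rw [sum_drop l k hkle]
      simp only [Prod.snd_sub]
      omega
  · -- join
    rintro p q hstp hstq ⟨hav, hp0⟩ ⟨hq, hqj⟩
    constructor
    · intro i hi1 hi2
      rw [List.length_append] at hi2
      rw [vert_append]
      rcases le_or_gt i p.length with hip | hip
      · rw [Nat.sub_eq_zero_of_le hip, vert_zero, add_zero]
        exact hav i hi1 hip
      · rintro ⟨hOn1, -⟩
        rw [vert_of_le p i (le_of_lt hip)] at hOn1
        have hq1 : 1 ≤ (vert q (i - p.length)).2 := hq _ (by omega) (by omega)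
        rw [Prod.snd_add] at hOn1
        omega
    · rw [List.sum_append, Prod.snd_add, hp0, hqj, zero_add]
  · -- uniq
    intro l hst k k' hk hk' hA hB hA' hB'
    have key : ∀ a b : ℕ, a ≤ l.length → b ≤ l.length →
        Pslit 0 (l.take a) → Pup j (l.drop a) → Pslit 0 (l.take b) → ¬ a < b := by
      intro a b ha hb hAa hBa hAb hab
      have hb0 : (vert l b).2 = 0 := by rw [← sum_take]; exact hAb.2
      have ha0 : (vert l a).2 = 0 := by rw [← sum_take]; exact hAa.2
      have := hBa.1 (b - a) (by omega) (by rw [List.length_drop]; omega)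
      rw [vert_drop, Prod.snd_sub] at this
      rw [Nat.add_sub_cancel' (le_of_lt hab)] at this
      omega
    rcases lt_trichotomy k k' with h | h | h
    · exact absurd h (key k k' hk hk' hA hB hA')
    · exact h
    · exact absurd h (key k' k hk' hk hA' hB' hA)

lemma slit_decomp_dn {S : Finset Pt} (hS : ∀ s ∈ S, |s.2| ≤ 1) {j : ℤ} (hj : j ≤ -1) :
    lser S (Pslit j) = lser S (Pslit 0) * lser S (Pdn j) := by
  apply lser_mul
  · intro l hst hP
    obtain ⟨hav, hsum⟩ := hP
    have h0 : (vert l 0).2 = 0 := by rw [vert_zero]; rfl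
    have hn : (vert l l.length).2 = j := by rw [vert_length]; exact hsum
    set k := Nat.findGreatest (fun m => (vert l m).2 = 0) l.length with hk
    have hkle : k ≤ l.length := Nat.findGreatest_le l.length
    have hk0 : (vert l k).2 = 0 :=
      Nat.findGreatest_spec (P := fun m => (vert l m).2 = 0) (Nat.zero_le l.length) h0
    have hne : ∀ m, k < m → m ≤ l.length → (vert l m).2 ≠ 0 := fun m h1 h2 =>
      Nat.findGreatest_is_greatest (P := fun m => (vert l m).2 = 0) h1 h2
    have hpos : ∀ m, k < m → m ≤ l.length → (vert l m).2 ≤ -1 := by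
      intro m h1 h2
      have := stay_below (fun m => (vert l m).2) 0 k l.length hkle
        (fun i hi => (hstep_le hS hst hi).2) hne
        (show (vert l l.length).2 < (0:ℤ) by omega) m h1 h2
      have h3 : (vert l m).2 < (0:ℤ) := this
      omega
    refine ⟨k, hkle, ⟨?_, ?_⟩, ⟨?_, ?_⟩⟩
    · intro i hi1 hi2
      rw [List.length_take] at hi2
      rw [vert_take l k i (by omega)]
      exact hav i hi1 (by omega)
    · show ((l.take k).sum).2 = 0
      rw [sum_take]; exact hk0
    · intro m hm1 hm2
      rw [List.length_drop] at hm2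
      rw [vert_drop]
      have := hpos (k + m) (by omega) (by omega)
      simp only [Prod.snd_sub]
      omega
    · show ((l.drop k).sum).2 = j
      rw [sum_drop l k hkle]
      simp only [Prod.snd_sub]
      omega
  · rintro p q hstp hstq ⟨hav, hp0⟩ ⟨hq, hqj⟩
    constructor
    · intro i hi1 hi2
      rw [List.length_append] at hi2
      rw [vert_append]
      rcases le_or_gt i p.length with hip | hip
      · rw [Nat.sub_eq_zero_of_le hip, vert_zero, add_zero]
        exact hav i hi1 hip
      · rintro ⟨hOn1, -⟩
        rw [vert_of_le p i (le_of_lt hip)] at hOn1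
        have hq1 : (vert q (i - p.length)).2 ≤ -1 := hq _ (by omega) (by omega)
        rw [Prod.snd_add] at hOn1
        omega
    · rw [List.sum_append, Prod.snd_add, hp0, hqj, zero_add]
  · intro l hst k k' hk hk' hA hB hA' hB'
    have key : ∀ a b : ℕ, a ≤ l.length → b ≤ l.length →
        Pslit 0 (l.take a) → Pdn j (l.drop a) → Pslit 0 (l.take b) → ¬ a < b := by
      intro a b ha hb hAa hBa hAb hab
      have hb0 : (vert l b).2 = 0 := by rw [← sum_take]; exact hAb.2
      have ha0 : (vert l a).2 = 0 := by rw [← sum_take]; exact hAa.2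
      have := hBa.1 (b - a) (by omega) (by rw [List.length_drop]; omega)
      rw [vert_drop, Prod.snd_sub] at this
      rw [Nat.add_sub_cancel' (le_of_lt hab)] at this
      omega
    rcases lt_trichotomy k k' with h | h | h
    · exact absurd h (key k k' hk hk' hA hB hA')
    · exact h
    · exact absurd h (key k' k hk' hk hA' hB' hA)

/-! ### last step decomposition -/

def Qlast (P : List Pt → Prop) (δ : ℤ) (l : List Pt) : Prop :=
  P l ∧ l.getLast?.map Prod.snd = some δ

lemma last_decomp {S : Finset Pt} (φ : ℤ → Prop) (j δ : ℤ) (hj : φ j) :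
    lser S (Qlast (Pht φ j) δ) = lser S (Pht φ (j - δ)) * lser S (PStep δ) := by
  apply lser_mul
  · -- split
    rintro l hst ⟨⟨hht, hsum⟩, hlast⟩
    have hne : l ≠ [] := by intro h; subst h; simp at hlast
    have hn1 : 1 ≤ l.length := List.length_pos_iff.mpr hne
    have hidx : l.length - 1 < l.length := by omega
    have hlv : (l[l.length - 1]'hidx).2 = δ := by
      rw [List.getLast?_eq_getElem?, List.getElem?_eq_getElem hidx] at hlast
      simpa using hlast
    have hvs := vert_succ l (l.length - 1) hidx
    rw [show l.length - 1 + 1 = l.length by omega] at hvs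
    have hprev : (vert l (l.length - 1)).2 = j - δ := by
      have h9 : (vert l l.length).2 = j := by rw [vert_length]; exact hsum
      rw [hvs, Prod.snd_add, hlv] at h9
      omega
    refine ⟨l.length - 1, by omega, ⟨?_, ?_⟩, ?_, ?_⟩
    · intro i hi1 hi2
      rw [List.length_take] at hi2
      rw [vert_take l _ i (by omega)]
      exact hht i hi1 (by omega)
    · show ((l.take (l.length - 1)).sum).2 = j - δ
      rw [sum_take]; exact hprev
    · rw [List.length_drop]; omega
    · show ((l.drop (l.length - 1)).sum).2 = δ
      rw [sum_drop l _ (by omega), Prod.snd_sub, hprev]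
      have : (l.sum).2 = j := hsum
      omega
  · -- join
    rintro p q hstp hstq ⟨hht, hpsum⟩ ⟨hqlen, hqsum⟩
    obtain ⟨s, rfl⟩ := List.length_eq_one_iff.mp hqlen
    have hs2 : s.2 = δ := by simpa using hqsum
    refine ⟨⟨?_, ?_⟩, ?_⟩
    · intro i hi1 hi2
      rw [List.length_append, List.length_singleton] at hi2
      rw [vert_append]
      rcases le_or_gt i p.length with hip | hip
      · rw [Nat.sub_eq_zero_of_le hip, vert_zero, add_zero]
        exact hht i hi1 hip
      · have hi : i - p.length = 1 := by omega
        rw [vert_of_le p i (by omega), hi]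
        have hv1 : vert [s] 1 = s := by simp [vert]
        rw [hv1, Prod.snd_add, hpsum, hs2]
        rw [show j - δ + δ = j by ring]
        exact hj
    · rw [List.sum_append, Prod.snd_add, hpsum]
      simp [hs2]
    · rw [List.getLast?_concat]
      simp [hs2]
  · -- uniq
    intro l hst k k' hk hk' hA hB hA' hB'
    have h1 := hB.1
    have h2 := hB'.1
    rw [List.length_drop] at h1 h2
    omega

lemma lser_Pht_zero {S : Finset Pt} (φ : ℤ → Prop) (h0 : ¬ φ 0) :
    lser S (Pht φ 0) = 1 := by
  classical
  apply PowerSeries.ext; intro n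
  rw [coeff_lser]
  cases n with
  | zero =>
    have : (allLists S 0).filter (Pht φ 0) = {[]} := by
      have h1 : allLists S 0 = {[]} := rfl
      rw [h1, Finset.filter_singleton, if_pos]
      constructor
      · intro i hi1 hi2; simp at hi2; omega
      · rfl
    rw [this, Finset.sum_singleton]
    have h8 : (([] : List Pt).sum).1 = 0 := rfl
    rw [h8, PowerSeries.coeff_zero_eq_constantCoeff, map_one]
    exact AddMonoidAlgebra.one_def.symm
  | succ n =>
    have : (allLists S (n+1)).filter (Pht φ 0) = ∅ := by
      apply Finset.filter_false_of_mem
      intro l hl hP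
      have hlen := (mem_allLists.mp hl).1
      have := hP.1 l.length (by omega) le_rfl
      rw [vert_length] at this
      rw [hP.2] at this
      exact h0 this
    rw [this, Finset.sum_empty]
    rw [PowerSeries.coeff_one, if_neg (by omega)]

lemma lser_three {S : Finset Pt} (hS : ∀ s ∈ S, |s.2| ≤ 1) (φ : ℤ → Prop) (j : ℤ)
    (hjne : j ≠ 0) :
    lser S (Pht φ j) = lser S (Qlast (Pht φ j) 1) + lser S (Qlast (Pht φ j) 0)
      + lser S (Qlast (Pht φ j) (-1)) := by
  have key : ∀ l, StepsIn S l → (Pht φ j l ↔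
      (Qlast (Pht φ j) 1 l ∨ Qlast (Pht φ j) 0 l) ∨ Qlast (Pht φ j) (-1) l) := by
    intro l hst
    constructor
    · intro hP
      have hne : l ≠ [] := by
        intro h; subst h
        exact hjne (by simpa using hP.2.symm)
      have hmem := List.getLast_mem hne
      have habs : |(l.getLast hne).2| ≤ 1 := hS _ (hst _ hmem)
      have hlast : l.getLast? = some (l.getLast hne) := List.getLast?_eq_getLast hne
      have : (l.getLast hne).2 = 1 ∨ (l.getLast hne).2 = 0 ∨ (l.getLast hne).2 = -1 := by
        rw [abs_le] at habs; omega
      rcases this with h | h | h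
      · exact Or.inl (Or.inl ⟨hP, by rw [hlast]; simp [h]⟩)
      · exact Or.inl (Or.inr ⟨hP, by rw [hlast]; simp [h]⟩)
      · exact Or.inr ⟨hP, by rw [hlast]; simp [h]⟩
    · rintro ((h | h) | h) <;> exact h.1
  have hd : ∀ (a b : ℤ), a ≠ b → ∀ l, ¬ (Qlast (Pht φ j) a l ∧ Qlast (Pht φ j) b l) := by
    rintro a b hab l ⟨⟨-, h1⟩, ⟨-, h2⟩⟩
    rw [h1] at h2
    exact hab (by simpa using h2)
  have e1 : lser S (Pht φ j)
      = lser S (fun l => Qlast (Pht φ j) 1 l ∨ Qlast (Pht φ j) 0 l)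
        + lser S (Qlast (Pht φ j) (-1)) :=
    lser_add key (fun l _ h => by
      rcases h.1 with h1 | h0
      · exact hd 1 (-1) (by norm_num) l ⟨h1, h.2⟩
      · exact hd 0 (-1) (by norm_num) l ⟨h0, h.2⟩)
  have e2 : lser S (fun l => Qlast (Pht φ j) 1 l ∨ Qlast (Pht φ j) 0 l)
      = lser S (Qlast (Pht φ j) 1) + lser S (Qlast (Pht φ j) 0) :=
    lser_add (fun l _ => Iff.rfl) (fun l _ h => hd 1 0 (by norm_num) l h)
  rw [e1, e2]

/-! ### arch factorization -/

lemma up_decomp {S : Finset Pt} (hS : ∀ s ∈ S, |s.2| ≤ 1) {j : ℤ} (hj : 2 ≤ j) :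
    lser S (Pup j) = lser S (Pup 1) * lser S (Pup (j - 1)) := by
  apply lser_mul
  · -- split
    rintro l hst ⟨hht, hsum⟩
    have hn1 : 1 ≤ l.length := by
      by_contra h
      have : l = [] := by
        cases l with
        | nil => rfl
        | cons a l => simp at h
      subst this
      have : ((0:Pt)).2 = j := hsum
      simp at this; omega
    have h0 : (vert l 0).2 = 0 := by rw [vert_zero]; rfl
    have h1le : (vert l 1).2 ≤ 1 := by
      have := (hstep_le hS hst (show 0 < l.length by omega)).1
      rw [show (0:ℕ)+1 = 1 from rfl] at this
      omega
    have h11 : (vert l 1).2 = 1 := le_antisymm h1le (hht 1 le_rfl hn1)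
    set k := Nat.findGreatest (fun m => (vert l m).2 = 1) l.length with hk
    have hkle : k ≤ l.length := Nat.findGreatest_le l.length
    have hk1 : (vert l k).2 = 1 :=
      Nat.findGreatest_spec (P := fun m => (vert l m).2 = 1) hn1 h11
    have hne : ∀ m, k < m → m ≤ l.length → (vert l m).2 ≠ 1 := fun m a b =>
      Nat.findGreatest_is_greatest (P := fun m => (vert l m).2 = 1) a b
    have hn : (vert l l.length).2 = j := by rw [vert_length]; exact hsum
    have hpos : ∀ m, k < m → m ≤ l.length → 2 ≤ (vert l m).2 := by
      intro m m1 m2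
      have := stay_above (fun m => (vert l m).2) 1 k l.length hkle
        (fun i hi => (hstep_le hS hst hi).1) hne
        (show (1:ℤ) < (vert l l.length).2 by omega) m m1 m2
      have h3 : (1:ℤ) < (vert l m).2 := this
      omega
    refine ⟨k, hkle, ⟨?_, ?_⟩, ⟨?_, ?_⟩⟩
    · intro i hi1 hi2
      rw [List.length_take] at hi2
      rw [vert_take l k i (by omega)]
      exact hht i hi1 (by omega)
    · show ((l.take k).sum).2 = 1
      rw [sum_take]; exact hk1
    · intro m hm1 hm2
      rw [List.length_drop] at hm2
      rw [vert_drop]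
      have := hpos (k + m) (by omega) (by omega)
      simp only [Prod.snd_sub]
      omega
    · show ((l.drop k).sum).2 = j - 1
      rw [sum_drop l k hkle, Prod.snd_sub]
      omega
  · -- join
    rintro p q hstp hstq ⟨hp, hp1⟩ ⟨hq, hqj⟩
    constructor
    · intro i hi1 hi2
      rw [List.length_append] at hi2
      rw [vert_append]
      rcases le_or_gt i p.length with hip | hip
      · rw [Nat.sub_eq_zero_of_le hip, vert_zero, add_zero]
        exact hp i hi1 hip
      · rw [vert_of_le p i (le_of_lt hip)]
        have := hq (i - p.length) (by omega) (by omega)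
        rw [Prod.snd_add, hp1]
        omega
    · rw [List.sum_append, Prod.snd_add, hp1, hqj]; ring
  · -- uniq
    intro l hst k k' hk hk' hA hB hA' hB'
    have key : ∀ a b : ℕ, a ≤ l.length → b ≤ l.length →
        Pup 1 (l.take a) → Pup (j-1) (l.drop a) → Pup 1 (l.take b) → ¬ a < b := by
      intro a b ha hb hAa hBa hAb hab
      have hb0 : (vert l b).2 = 1 := by rw [← sum_take]; exact hAb.2
      have ha0 : (vert l a).2 = 1 := by rw [← sum_take]; exact hAa.2
      have := hBa.1 (b - a) (by omega) (by rw [List.length_drop]; omega)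
      rw [vert_drop, Prod.snd_sub] at this
      rw [Nat.add_sub_cancel' (le_of_lt hab)] at this
      omega
    rcases lt_trichotomy k k' with h | h | h
    · exact absurd h (key k k' hk hk' hA hB hA')
    · exact h
    · exact absurd h (key k' k hk' hk hA' hB' hA)

lemma dn_decomp {S : Finset Pt} (hS : ∀ s ∈ S, |s.2| ≤ 1) {j : ℤ} (hj : j ≤ -2) :
    lser S (Pdn j) = lser S (Pdn (-1)) * lser S (Pdn (j + 1)) := by
  apply lser_mul
  · -- split
    rintro l hst ⟨hht, hsum⟩
    have hn1 : 1 ≤ l.length := by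
      by_contra h
      have : l = [] := by
        cases l with
        | nil => rfl
        | cons a l => simp at h
      subst this
      have : ((0:Pt)).2 = j := hsum
      simp at this; omega
    have h0 : (vert l 0).2 = 0 := by rw [vert_zero]; rfl
    have h1le : -1 ≤ (vert l 1).2 := by
      have := (hstep_le hS hst (show 0 < l.length by omega)).2
      rw [show (0:ℕ)+1 = 1 from rfl] at this
      omega
    have h11 : (vert l 1).2 = -1 := le_antisymm (hht 1 le_rfl hn1) h1le
    set k := Nat.findGreatest (fun m => (vert l m).2 = -1) l.length with hk
    have hkle : k ≤ l.length := Nat.findGreatest_le l.length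
    have hk1 : (vert l k).2 = -1 :=
      Nat.findGreatest_spec (P := fun m => (vert l m).2 = -1) hn1 h11
    have hne : ∀ m, k < m → m ≤ l.length → (vert l m).2 ≠ -1 := fun m a b =>
      Nat.findGreatest_is_greatest (P := fun m => (vert l m).2 = -1) a b
    have hn : (vert l l.length).2 = j := by rw [vert_length]; exact hsum
    have hpos : ∀ m, k < m → m ≤ l.length → (vert l m).2 ≤ -2 := by
      intro m m1 m2
      have := stay_below (fun m => (vert l m).2) (-1) k l.length hkle
        (fun i hi => (hstep_le hS hst hi).2) hne
        (show (vert l l.length).2 < (-1:ℤ) by omega) m m1 m2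
      have h3 : (vert l m).2 < (-1:ℤ) := this
      omega
    refine ⟨k, hkle, ⟨?_, ?_⟩, ⟨?_, ?_⟩⟩
    · intro i hi1 hi2
      rw [List.length_take] at hi2
      rw [vert_take l k i (by omega)]
      exact hht i hi1 (by omega)
    · show ((l.take k).sum).2 = -1
      rw [sum_take]; exact hk1
    · intro m hm1 hm2
      rw [List.length_drop] at hm2
      rw [vert_drop]
      have := hpos (k + m) (by omega) (by omega)
      simp only [Prod.snd_sub]
      omega
    · show ((l.drop k).sum).2 = j + 1
      rw [sum_drop l k hkle, Prod.snd_sub]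
      omega
  · -- join
    rintro p q hstp hstq ⟨hp, hp1⟩ ⟨hq, hqj⟩
    constructor
    · intro i hi1 hi2
      rw [List.length_append] at hi2
      rw [vert_append]
      rcases le_or_gt i p.length with hip | hip
      · rw [Nat.sub_eq_zero_of_le hip, vert_zero, add_zero]
        exact hp i hi1 hip
      · rw [vert_of_le p i (le_of_lt hip)]
        have := hq (i - p.length) (by omega) (by omega)
        rw [Prod.snd_add, hp1]
        omega
    · rw [List.sum_append, Prod.snd_add, hp1, hqj]; ring
  · -- uniq
    intro l hst k k' hk hk' hA hB hA' hB'
    have key : ∀ a b : ℕ, a ≤ l.length → b ≤ l.length →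
        Pdn (-1) (l.take a) → Pdn (j+1) (l.drop a) → Pdn (-1) (l.take b) → ¬ a < b := by
      intro a b ha hb hAa hBa hAb hab
      have hb0 : (vert l b).2 = -1 := by rw [← sum_take]; exact hAb.2
      have ha0 : (vert l a).2 = -1 := by rw [← sum_take]; exact hAa.2
      have := hBa.1 (b - a) (by omega) (by rw [List.length_drop]; omega)
      rw [vert_drop, Prod.snd_sub] at this
      rw [Nat.add_sub_cancel' (le_of_lt hab)] at this
      omega
    rcases lt_trichotomy k k' with h | h | h
    · exact absurd h (key k k' hk hk' hA hB hA')
    · exact h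
    · exact absurd h (key k' k hk' hk hA' hB' hA)

lemma up_pow {S : Finset Pt} (hS : ∀ s ∈ S, |s.2| ≤ 1) :
    ∀ m : ℕ, lser S (Pup ((m : ℤ) + 1)) = lser S (Pup 1) ^ (m + 1) := by
  intro m
  induction m with
  | zero => simp
  | succ m ih =>
    have hd := up_decomp (S := S) hS (j := (m:ℤ) + 2) (by omega)
    rw [show ((m:ℤ) + 2) - 1 = (m:ℤ) + 1 by ring] at hd
    have hc : ((m+1:ℕ) : ℤ) + 1 = (m:ℤ) + 2 := by push_cast; ring
    rw [hc, hd, ih, pow_succ]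
    ring

lemma dn_pow {S : Finset Pt} (hS : ∀ s ∈ S, |s.2| ≤ 1) :
    ∀ m : ℕ, lser S (Pdn (-((m : ℤ) + 1))) = lser S (Pdn (-1)) ^ (m + 1) := by
  intro m
  induction m with
  | zero => simp
  | succ m ih =>
    have hd := dn_decomp (S := S) hS (j := -((m:ℤ) + 2)) (by omega)
    rw [show -((m:ℤ) + 2) + 1 = -((m:ℤ) + 1) by ring] at hd
    have hc : -(((m+1:ℕ) : ℤ) + 1) = -((m:ℤ) + 2) := by push_cast; ring
    rw [hc, hd, ih, pow_succ]
    ring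

lemma F1_eq {S : Finset Pt} (hS : ∀ s ∈ S, |s.2| ≤ 1) :
    lser S (Pup 1) = PowerSeries.X * PowerSeries.C (Apoly S 1)
      + lser S (Pup 1) * (PowerSeries.X * PowerSeries.C (Apoly S 0))
      + lser S (Pup 1) * lser S (Pup 1) * (PowerSeries.X * PowerSeries.C (Apoly S (-1))) := by
  have h3 : lser S (Pup 1) = lser S (Qlast (Pup 1) 1) + lser S (Qlast (Pup 1) 0)
      + lser S (Qlast (Pup 1) (-1)) := lser_three hS _ 1 (by norm_num)
  have e1 : lser S (Qlast (Pup 1) 1) = lser S (Pup 0) * lser S (PStep 1) := by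
    have := last_decomp (S := S) (fun z => (1:ℤ) ≤ z) 1 1 (le_refl 1)
    rw [show (1:ℤ) - 1 = 0 by ring] at this
    exact this
  have e2 : lser S (Qlast (Pup 1) 0) = lser S (Pup 1) * lser S (PStep 0) := by
    have := last_decomp (S := S) (fun z => (1:ℤ) ≤ z) 1 0 (le_refl 1)
    rw [show (1:ℤ) - 0 = 1 by ring] at this
    exact this
  have e3 : lser S (Qlast (Pup 1) (-1)) = lser S (Pup 2) * lser S (PStep (-1)) := by
    have := last_decomp (S := S) (fun z => (1:ℤ) ≤ z) 1 (-1) (le_refl 1)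
    rw [show (1:ℤ) - (-1) = 2 by ring] at this
    exact this
  have e0 : lser S (Pup 0) = 1 := lser_Pht_zero _ (by norm_num)
  have e4 : lser S (Pup 2) = lser S (Pup 1) * lser S (Pup 1) := by
    have := up_decomp (S := S) hS (j := 2) (le_refl 2)
    rw [show (2:ℤ) - 1 = 1 by ring] at this
    exact this
  conv_lhs => rw [h3]
  rw [e1, e2, e3, e0, e4, one_mul, lser_PStep, lser_PStep, lser_PStep]

lemma Fd_eq {S : Finset Pt} (hS : ∀ s ∈ S, |s.2| ≤ 1) :
    lser S (Pdn (-1)) = PowerSeries.X * PowerSeries.C (Apoly S (-1))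
      + lser S (Pdn (-1)) * (PowerSeries.X * PowerSeries.C (Apoly S 0))
      + lser S (Pdn (-1)) * lser S (Pdn (-1)) * (PowerSeries.X * PowerSeries.C (Apoly S 1)) := by
  have h3 : lser S (Pdn (-1)) = lser S (Qlast (Pdn (-1)) 1) + lser S (Qlast (Pdn (-1)) 0)
      + lser S (Qlast (Pdn (-1)) (-1)) := lser_three hS _ (-1) (by norm_num)
  have e1 : lser S (Qlast (Pdn (-1)) 1) = lser S (Pdn (-2)) * lser S (PStep 1) := by
    have := last_decomp (S := S) (fun z => z ≤ (-1:ℤ)) (-1) 1 (le_refl (-1))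
    rw [show (-1:ℤ) - 1 = -2 by ring] at this
    exact this
  have e2 : lser S (Qlast (Pdn (-1)) 0) = lser S (Pdn (-1)) * lser S (PStep 0) := by
    have := last_decomp (S := S) (fun z => z ≤ (-1:ℤ)) (-1) 0 (le_refl (-1))
    rw [show (-1:ℤ) - 0 = -1 by ring] at this
    exact this
  have e3 : lser S (Qlast (Pdn (-1)) (-1)) = lser S (Pdn 0) * lser S (PStep (-1)) := by
    have := last_decomp (S := S) (fun z => z ≤ (-1:ℤ)) (-1) (-1) (le_refl (-1))
    rw [show (-1:ℤ) - (-1) = 0 by ring] at this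
    exact this
  have e0 : lser S (Pdn 0) = 1 := lser_Pht_zero _ (by norm_num)
  have e4 : lser S (Pdn (-2)) = lser S (Pdn (-1)) * lser S (Pdn (-1)) := by
    have := dn_decomp (S := S) hS (j := -2) (le_refl (-2))
    rw [show (-2:ℤ) + 1 = -1 by ring] at this
    exact this
  conv_lhs => rw [h3]
  rw [e1, e2, e3, e0, e4, one_mul, lser_PStep, lser_PStep, lser_PStep]
  ring

/-- for a step set with small height variations, if `Z` is the series
(multiple of `t`) with `tZ² - (1-tA₀)Z + tA₁A₋₁ = 0`, then for every `j ≥ 0`,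
`A₋₁(x)^j S_j(x;t) = S₀(x;t) Z(x;t)^j` and `A₁(x)^j S₋ⱼ(x;t) = S₀(x;t) Z(x;t)^j`,
where `S_j` is the generating function of walks on the slit plane ending at
ordinate `j`. -/
theorem statement13 (S : Finset Pt)
    (hS : ∀ s ∈ S, |s.2| ≤ 1)
    (Z : PowerSeries L1)
    (hZ0 : PowerSeries.coeff 0 Z = 0)
    (hZeq : PowerSeries.X * Z ^ 2
        - (1 - PowerSeries.X * PowerSeries.C (Apoly S 0)) * Z
        + PowerSeries.X * PowerSeries.C (Apoly S 1 * Apoly S (-1)) = 0)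
    (Sfam : ℤ → PowerSeries L1)
    (hSfam : ∀ (j : ℤ) (n : ℕ) (i : ℤ),
      (PowerSeries.coeff n (Sfam j)).coeff i = (slitCount S n (i, j) : ℚ)) :
    ∀ j : ℕ,
      PowerSeries.C (Apoly S (-1)) ^ j * Sfam j = Sfam 0 * Z ^ j ∧
      PowerSeries.C (Apoly S 1) ^ j * Sfam (-(j : ℤ)) = Sfam 0 * Z ^ j := by
  classical
  have hSf : ∀ j : ℤ, Sfam j = lser S (Pslit j) := Sfam_eq Sfam hSfam
  have hm : PowerSeries.C (Apoly S 1 * Apoly S (-1))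
      = PowerSeries.C (Apoly S 1) * PowerSeries.C (Apoly S (-1)) := map_mul _ _ _
  have hZc : PowerSeries.X * (PowerSeries.C (Apoly S (-1)) * lser S (Pup 1)) ^ 2
      - (1 - PowerSeries.X * PowerSeries.C (Apoly S 0))
          * (PowerSeries.C (Apoly S (-1)) * lser S (Pup 1))
      + PowerSeries.X * PowerSeries.C (Apoly S 1 * Apoly S (-1)) = 0 := by
    rw [hm]
    linear_combination - PowerSeries.C (Apoly S (-1)) * F1_eq hS
  have hZF1 : Z = PowerSeries.C (Apoly S (-1)) * lser S (Pup 1) :=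
    quad_uniq _ _ _ _ hZeq hZc
  have hWd : PowerSeries.X * (PowerSeries.C (Apoly S 1) * lser S (Pdn (-1))) ^ 2
      - (1 - PowerSeries.X * PowerSeries.C (Apoly S 0))
          * (PowerSeries.C (Apoly S 1) * lser S (Pdn (-1)))
      + PowerSeries.X * PowerSeries.C (Apoly S 1 * Apoly S (-1)) = 0 := by
    rw [hm]
    linear_combination - PowerSeries.C (Apoly S 1) * Fd_eq hS
  have hZFd : Z = PowerSeries.C (Apoly S 1) * lser S (Pdn (-1)) :=
    quad_uniq _ _ _ _ hZeq hWd
  intro j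
  cases j with
  | zero =>
    constructor <;> simp
  | succ m =>
    constructor
    · have h1 : Sfam ((m+1 : ℕ) : ℤ) = Sfam 0 * lser S (Pup 1) ^ (m+1) := by
        rw [hSf, hSf]
        have hcast : ((m+1:ℕ):ℤ) = (m:ℤ)+1 := by push_cast; ring
        rw [hcast, slit_decomp_up hS (by omega), up_pow hS m]
      rw [h1, hZF1, mul_pow]
      ring
    · have h1 : Sfam (-((m+1 : ℕ) : ℤ)) = Sfam 0 * lser S (Pdn (-1)) ^ (m+1) := by
        rw [hSf, hSf]
        have hcast : (-((m+1:ℕ):ℤ)) = -((m:ℤ)+1) := by push_cast; ring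
        rw [hcast, slit_decomp_dn hS (by omega), dn_pow hS m]
      rw [h1, hZFd, mul_pow]
      ring

end SlitPlane
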